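/- arXiv:1201.0640 — 4 statements merged into one kernel-verified Lean document; each statement's English description precedes it below -/
import Mathlib

section
/- For all real numbers a and b, the matrix F(a,b) is a complex Hadamard matrix of order 6: all of its entries have modulus 1 and its rows are pairwise orthogonal with respect to the standard Hermitian inner product on ℂ^6. -/
noncomputable section

/-- A complex Hadamard matrix: all entries have modulus 1 and the rows are pairwise
orthogonal with respect to the standard Hermitian inner product. -/
def IsComplexHadamard {n : Type*} [Fintype n] (M : Matrix n n ℂ) : Prop :=
  (∀ j k, ‖M j k‖ = 1) ∧
    ∀ j k, j ≠ k → ∑ l, M j l * (starRingEnd ℂ) (M k l) = 0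

/-- `ω = e^{2πi/3}`. -/
def omega3 : ℂ := Complex.exp (2 * Real.pi * Complex.I / 3)

/-- The `3×3` Fourier matrix `F_3 = (ω^{jk})`. -/
def F3 : Matrix (Fin 3) (Fin 3) ℂ := fun j k => omega3 ^ (j.val * k.val)

/-- `D(a,b) = diag(1, e^{2πia}, e^{2πib})`. -/
def Dmat (a b : ℝ) : Matrix (Fin 3) (Fin 3) ℂ :=
  Matrix.diagonal ![1, Complex.exp (2 * Real.pi * Complex.I * a),
    Complex.exp (2 * Real.pi * Complex.I * b)]

/-- The Fourier family `F(a,b) = [[F_3, D(a,b)F_3],[F_3, −D(a,b)F_3]]`. -/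
def Fab (a b : ℝ) : Matrix (Fin 6) (Fin 6) ℂ :=
  Matrix.reindex finSumFinEquiv finSumFinEquiv
    (Matrix.fromBlocks F3 (Dmat a b * F3) F3 (-(Dmat a b * F3)))

lemma omega3_abs : ‖omega3‖ = 1 := by
  have : omega3 = Complex.exp (((2*Real.pi/3 : ℝ) : ℂ) * Complex.I) := by
    rw [omega3]; congr 1; push_cast; ring
  rw [this, Complex.norm_exp_ofReal_mul_I]

lemma omega3_pow3 : omega3 ^ 3 = 1 := by
  rw [omega3, ← Complex.exp_nat_mul]
  have : ((3:ℕ):ℂ) * (2 * Real.pi * Complex.I / 3) = 2 * Real.pi * Complex.I := by push_cast; ring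
  rw [this, Complex.exp_two_pi_mul_I]

lemma omega3_ne_one : omega3 ≠ 1 := by
  have h : omega3 = Complex.exp (((2*Real.pi/3 : ℝ) : ℂ) * Complex.I) := by
    rw [omega3]; congr 1; push_cast; ring
  intro hc
  have him : omega3.im = Real.sin (2*Real.pi/3) := by
    rw [h, Complex.exp_ofReal_mul_I_im]
  have hpos : 0 < Real.sin (2*Real.pi/3) := by
    apply Real.sin_pos_of_pos_of_lt_pi
    · positivity
    · nlinarith [Real.pi_pos]
  rw [hc] at him
  simp at him
  linarith [him ▸ hpos]

lemma omega3_sum : 1 + omega3 + omega3 ^ 2 = 0 := by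
  have h := omega3_pow3
  have hf : (omega3 - 1) * (1 + omega3 + omega3 ^ 2) = 0 := by linear_combination h
  rcases mul_eq_zero.mp hf with h1 | h2
  · exact absurd (sub_eq_zero.mp h1) omega3_ne_one
  · exact h2

lemma omega3_mul_conj : omega3 * (starRingEnd ℂ) omega3 = 1 := by
  rw [Complex.mul_conj, Complex.normSq_eq_norm_sq, omega3_abs]; norm_num

lemma omega3_conj : (starRingEnd ℂ) omega3 = omega3 ^ 2 := by
  linear_combination (-(starRingEnd ℂ) omega3) * omega3_pow3 + omega3 ^ 2 * omega3_mul_conj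


lemma omega3_pow_mod (n : ℕ) : omega3 ^ n = omega3 ^ (n % 3) := by
  conv_lhs => rw [← Nat.div_add_mod n 3]
  rw [pow_add, pow_mul, omega3_pow3, one_pow, one_mul]

lemma F3_orth (j k : Fin 3) :
    ∑ l, F3 j l * (starRingEnd ℂ) (F3 k l) = if j = k then 3 else 0 := by
  fin_cases j <;> fin_cases k <;>
    simp [F3, Fin.sum_univ_three, map_pow, omega3_conj, ← pow_mul]
  all_goals try ring_nf
  all_goals try simp only [omega3_pow_mod 3, omega3_pow_mod 4, omega3_pow_mod 5, omega3_pow_mod 6,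
      omega3_pow_mod 8, omega3_pow_mod 10, omega3_pow_mod 12]
  all_goals try norm_num
  all_goals
    first
      | linear_combination (-3 : ℂ) * omega3_sum
      | linear_combination (-4 : ℂ) * omega3_sum
      | linear_combination omega3_sum
      | linear_combination -omega3_sum
      | linear_combination (2 : ℂ) * omega3_sum
      | linear_combination (-2 : ℂ) * omega3_sum


lemma exp_abs_one (a : ℝ) : ‖Complex.exp (2 * Real.pi * Complex.I * a)‖ = 1 := by
  have : 2 * (Real.pi:ℂ) * Complex.I * a = ((2 * Real.pi * a : ℝ) : ℂ) * Complex.I := by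
    push_cast; ring
  rw [this, Complex.norm_exp_ofReal_mul_I]

lemma dvec_abs (a b : ℝ) (p : Fin 3) :
    ‖(![1, Complex.exp (2 * Real.pi * Complex.I * a),
      Complex.exp (2 * Real.pi * Complex.I * b)] p)‖ = 1 := by
  fin_cases p <;> simp [exp_abs_one]

lemma dvec_mul_conj (a b : ℝ) (p : Fin 3) :
    (![1, Complex.exp (2 * Real.pi * Complex.I * a),
      Complex.exp (2 * Real.pi * Complex.I * b)] p) *
    (starRingEnd ℂ) (![1, Complex.exp (2 * Real.pi * Complex.I * a),
      Complex.exp (2 * Real.pi * Complex.I * b)] p) = 1 := by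
  rw [Complex.mul_conj, Complex.normSq_eq_norm_sq, dvec_abs]; norm_num

lemma F3_abs (j k : Fin 3) : ‖F3 j k‖ = 1 := by
  simp [F3, map_pow, omega3_abs]


/-- For all real `a, b`, the matrix `F(a,b)` is a complex Hadamard matrix of order 6. -/
theorem Fab_isComplexHadamard (a b : ℝ) : IsComplexHadamard (Fab a b) := by
  unfold IsComplexHadamard
  let e : Fin 3 ⊕ Fin 3 ≃ Fin 6 := finSumFinEquiv
  set d : Fin 3 → ℂ := ![1, Complex.exp (2 * Real.pi * Complex.I * a),
      Complex.exp (2 * Real.pi * Complex.I * b)] with hd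
  have hmul : ∀ (p q : Fin 3), (Dmat a b * F3) p q = d p * F3 p q := by
    intro p q; simp [Dmat, Matrix.diagonal_mul, hd]
  have hrw : ∀ j l : Fin 6, Fab a b j l =
      (Matrix.fromBlocks F3 (Dmat a b * F3) F3 (-(Dmat a b * F3)))
        (e.symm j) (e.symm l) := by
    intro j l; simp [Fab, Matrix.reindex_apply, Matrix.submatrix_apply, e]
  constructor
  · intro j k
    rw [hrw]
    rcases hj : e.symm j with p | p <;>
      rcases hk : e.symm k with q | q <;>
      simp [Matrix.fromBlocks_apply₁₁, Matrix.fromBlocks_apply₁₂,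
        Matrix.fromBlocks_apply₂₁, Matrix.fromBlocks_apply₂₂, hmul, map_mul,
        F3_abs, dvec_abs, hd]
  · intro j k hjk
    have hsum6 : ∑ l, Fab a b j l * (starRingEnd ℂ) (Fab a b k l) =
        ∑ x : Fin 3 ⊕ Fin 3,
          (Matrix.fromBlocks F3 (Dmat a b * F3) F3 (-(Dmat a b * F3)))
            (e.symm j) x *
          (starRingEnd ℂ) ((Matrix.fromBlocks F3 (Dmat a b * F3) F3 (-(Dmat a b * F3)))
            (e.symm k) x) := by
      refine (Fintype.sum_equiv e _ _ fun x => ?_).symm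
      rw [hrw, hrw]
      simp
    rw [hsum6]
    have hne : e.symm j ≠ e.symm k := fun h => hjk (by
      simpa using congrArg e h)
    have key : ∀ (p q : Fin 3) (c : ℂ),
        (p ≠ q ∨ c = 0) →
        ∑ l, F3 p l * (starRingEnd ℂ) (F3 q l) * c = 0 := by
      intro p q c hc
      rw [← Finset.sum_mul, F3_orth]
      rcases hc with h | h
      · rw [if_neg h, zero_mul]
      · rw [h, mul_zero]
    rcases hj : e.symm j with p | p <;>
      rcases hk : e.symm k with q | q <;>
      rw [hj, hk] at hne <;>
      simp only [Fintype.sum_sum_type, Matrix.fromBlocks_apply₁₁, Matrix.fromBlocks_apply₁₂,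
        Matrix.fromBlocks_apply₂₁, Matrix.fromBlocks_apply₂₂, Matrix.neg_apply, hmul,
        map_mul, map_neg, mul_neg, neg_mul, neg_neg]
    · -- inl inl : p ≠ q
      have hpq : p ≠ q := fun h => hne (by rw [h])
      have h1 := key p q 1 (Or.inl hpq)
      have h2 : ∑ l, d p * F3 p l * ((starRingEnd ℂ) (d q) * (starRingEnd ℂ) (F3 q l)) =
          (d p * (starRingEnd ℂ) (d q)) * ∑ l, F3 p l * (starRingEnd ℂ) (F3 q l) := by
        rw [Finset.mul_sum]; exact Finset.sum_congr rfl fun l _ => by ring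
      rw [h2, F3_orth, if_neg hpq]
      simpa using h1
    · -- inl p, inr q
      have h2 : ∑ l, d p * F3 p l * ((starRingEnd ℂ) (d q) * (starRingEnd ℂ) (F3 q l)) =
          (d p * (starRingEnd ℂ) (d q)) * ∑ l, F3 p l * (starRingEnd ℂ) (F3 q l) := by
        rw [Finset.mul_sum]; exact Finset.sum_congr rfl fun l _ => by ring
      rw [Finset.sum_neg_distrib, h2, F3_orth]
      by_cases hpq : p = q
      · subst hpq
        have hdc := dvec_mul_conj a b p
        rw [← hd] at hdc
        rw [if_pos rfl, hdc]
        norm_num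
      · rw [if_neg hpq]
        simp
    · -- inr p, inl q
      have h2 : ∑ l, d p * F3 p l * ((starRingEnd ℂ) (d q) * (starRingEnd ℂ) (F3 q l)) =
          (d p * (starRingEnd ℂ) (d q)) * ∑ l, F3 p l * (starRingEnd ℂ) (F3 q l) := by
        rw [Finset.mul_sum]; exact Finset.sum_congr rfl fun l _ => by ring
      rw [Finset.sum_neg_distrib, h2, F3_orth]
      by_cases hpq : p = q
      · subst hpq
        have hdc := dvec_mul_conj a b p
        rw [← hd] at hdc
        rw [if_pos rfl, hdc]
        norm_num
      · rw [if_neg hpq]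
        simp
    · -- inr p, inr q
      have hpq : p ≠ q := fun h => hne (by rw [h])
      have h2 : ∑ l, d p * F3 p l * ((starRingEnd ℂ) (d q) * (starRingEnd ℂ) (F3 q l)) =
          (d p * (starRingEnd ℂ) (d q)) * ∑ l, F3 p l * (starRingEnd ℂ) (F3 q l) := by
        rw [Finset.mul_sum]; exact Finset.sum_congr rfl fun l _ => by ring
      rw [h2, F3_orth, if_neg hpq]
      simp
end
end

section
/- Let M be an m×n matrix with entries in a linearly ordered set. Then there exist a permutation of the rows of M and a permutation of the columns of M such that in the resulting matrix both the sequence of rows and the sequence of columns are nondecreasing with respect to lexicographic order. Consequently, the procedure of repeatedly sorting the rows lexicographically and then the columns lexicographically terminates after finitely many steps. -/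
/-- For any `m×n` matrix over a linearly ordered set there are permutations of the rows
and of the columns after which both the sequence of rows and the sequence of columns
are nondecreasing with respect to the lexicographic order (hence the procedure of
repeatedly sorting rows and columns lexicographically terminates in such a matrix). -/
theorem exists_row_col_perms_lex_sorted {m n : ℕ} {α : Type*} [LinearOrder α]
    (M : Matrix (Fin m) (Fin n) α) :
    ∃ (σ : Equiv.Perm (Fin m)) (τ : Equiv.Perm (Fin n)),
      Monotone (fun i => toLex (fun j => M (σ i) (τ j))) ∧
      Monotone (fun j => toLex (fun i => M (σ i) (τ j))) := by
  classical
  haveI : WellFoundedLT (Fin m) := inferInstance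
  haveI : WellFoundedLT (Fin n) := inferInstance
  -- Minimize the matrix (read as a lex sequence of lex rows) over all pairs of permutations.
  set F : Equiv.Perm (Fin m) × Equiv.Perm (Fin n) → Lex (Fin m → Lex (Fin n → α)) :=
    fun p => toLex (fun i => toLex (fun j => M (p.1 i) (p.2 j))) with hF
  obtain ⟨p, -, hmin⟩ := Finset.exists_min_image Finset.univ F ⟨(1, 1), Finset.mem_univ _⟩
  obtain ⟨σ, τ⟩ := p
  refine ⟨σ, τ, ?_, ?_⟩
  · -- rows are sorted
    intro i i' hii'
    rcases eq_or_lt_of_le hii' with rfl | hlt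
    · exact le_rfl
    by_contra hcon
    rw [not_le] at hcon
    -- hcon : row i' < row i (lex). Extract first differing column j0.
    obtain ⟨j0, hj0eq, hj0lt⟩ :
        ∃ j0, (∀ j, j < j0 → M (σ i') (τ j) = M (σ i) (τ j)) ∧
          M (σ i') (τ j0) < M (σ i) (τ j0) := hcon
    -- Swap rows i and i'.
    set σ' : Equiv.Perm (Fin m) := (Equiv.swap i i').trans σ with hσ'
    have hdec : F (σ', τ) < F (σ, τ) := by
      refine ⟨i, ?_, ?_⟩
      · intro a ha
        have h1 : a ≠ i := ne_of_lt ha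
        have h2 : a ≠ i' := ne_of_lt (ha.trans hlt)
        simp [hF, hσ', Equiv.swap_apply_of_ne_of_ne h1 h2]
      · show toLex (fun j => M (σ' i) (τ j)) < toLex (fun j => M (σ i) (τ j))
        have : σ' i = σ i' := by simp [hσ']
        rw [this]
        exact ⟨j0, fun j hj => hj0eq j hj, hj0lt⟩
    exact absurd (hmin (σ', τ) (Finset.mem_univ _)) (not_le.2 hdec)
  · -- columns are sorted
    intro j j' hjj'
    rcases eq_or_lt_of_le hjj' with rfl | hlt
    · exact le_rfl
    by_contra hcon
    rw [not_le] at hcon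
    -- hcon : col j' < col j (lex). Extract first differing row i0.
    obtain ⟨i0, hi0eq, hi0lt⟩ :
        ∃ i0, (∀ i, i < i0 → M (σ i) (τ j') = M (σ i) (τ j)) ∧
          M (σ i0) (τ j') < M (σ i0) (τ j) := hcon
    -- Swap columns j and j'.
    set τ' : Equiv.Perm (Fin n) := (Equiv.swap j j').trans τ with hτ'
    have hdec : F (σ, τ') < F (σ, τ) := by
      refine ⟨i0, ?_, ?_⟩
      · -- rows above i0 are unchanged: the swapped entries there are equal
        intro a ha
        show toLex (fun b => M (σ a) (τ' b)) = toLex (fun b => M (σ a) (τ b))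
        congr 1
        funext b
        rcases eq_or_ne b j with rfl | hbj
        · simp [hτ', Equiv.swap_apply_left, (hi0eq a ha).symm]
        rcases eq_or_ne b j' with rfl | hbj'
        · simp [hτ', Equiv.swap_apply_right, hi0eq a ha]
        · simp [hτ', Equiv.swap_apply_of_ne_of_ne hbj hbj']
      · show toLex (fun b => M (σ i0) (τ' b)) < toLex (fun b => M (σ i0) (τ b))
        refine ⟨j, ?_, ?_⟩
        · intro b hb
          have h1 : b ≠ j := ne_of_lt hb
          have h2 : b ≠ j' := ne_of_lt (hb.trans hlt)
          simp [hτ', Equiv.swap_apply_of_ne_of_ne h1 h2]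
        · simpa [hτ', Equiv.swap_apply_left] using hi0lt
    exact absurd (hmin (σ, τ') (Finset.mem_univ _)) (not_le.2 hdec)
end

section
/- Let N be a positive integer and let u = (0, j_1,...,j_5) with j_k ∈ {0,...,N−1} be N-unbiased to v_0 = (0,0,0,0,0,0), i.e., suppose there exist φ_k ∈ I_{j_k} and ψ_k ∈ I_0 = [0, 1/N) with |1 + ∑_{k=1}^5 e^{2πi(φ_k − ψ_k)}| = √6. Then there exist ε_1,...,ε_5 ∈ {0,1} such that the vector (0, (j_1 − ε_1) mod N, ..., (j_5 − ε_5) mod N) belongs to UB_N; that is, there exist θ_k ∈ I_{(j_k−ε_k) mod N} with |1 + ∑_{k=1}^5 e^{2πiθ_k}| = √6. -/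
/-- If `u = (0, j 0, …, j 4)` is `N`-unbiased to `v₀ = (0,…,0)`, i.e. there are
phases `φ k ∈ I_{j k} = [j k/N, (j k+1)/N)` and `ψ k ∈ I_0 = [0, 1/N)` with
`|1 + ∑ e^{2πi(φ_k − ψ_k)}| = √6`, then there are `ε k ∈ {0,1}` such that the vector
with coordinates `(j k − ε k) mod N` belongs to `UB_N`: there exist phases
`θ k ∈ I_{(j k − ε k) mod N}` with `|1 + ∑ e^{2πiθ_k}| = √6`. -/
theorem nUnbiased_to_zero_shift (N : ℕ) (hN : 0 < N)
    (j : Fin 5 → ℕ) (hj : ∀ k, j k < N) (φ ψ : Fin 5 → ℝ)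
    (hφ : ∀ k, φ k ∈ Set.Ico ((j k : ℝ) / N) (((j k : ℝ) + 1) / N))
    (hψ : ∀ k, ψ k ∈ Set.Ico (0 : ℝ) (1 / N))
    (h : ‖(1 + ∑ k, Complex.exp (2 * Real.pi * Complex.I * ((φ k - ψ k : ℝ) : ℂ)))‖
      = Real.sqrt 6) :
    ∃ ε : Fin 5 → ℕ, (∀ k, ε k ≤ 1) ∧
      ∃ θ : Fin 5 → ℝ,
        (∀ k, θ k ∈ Set.Ico ((((j k + N - ε k) % N : ℕ) : ℝ) / N)
          (((((j k + N - ε k) % N : ℕ) : ℝ) + 1) / N)) ∧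
        ‖(1 + ∑ k, Complex.exp (2 * Real.pi * Complex.I * ((θ k : ℝ) : ℂ)))‖
          = Real.sqrt 6 := by
  classical
  have hNpos : (0:ℝ) < N := by exact_mod_cast hN
  have hNne : (N:ℝ) ≠ 0 := ne_of_gt hNpos
  refine ⟨fun k => if φ k - ψ k < (j k : ℝ) / N then 1 else 0,
    fun k => by dsimp only; split <;> omega, ?_⟩
  refine ⟨fun k => if φ k - ψ k < (j k : ℝ) / N ∧ j k = 0 then φ k - ψ k + 1
      else φ k - ψ k, ?_, ?_⟩
  · intro k
    obtain ⟨hφ1, hφ2⟩ := hφ k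
    obtain ⟨hψ1, hψ2⟩ := hψ k
    have hjk : j k < N := hj k
    dsimp only
    by_cases hlt : φ k - ψ k < (j k : ℝ) / N
    · by_cases hj0 : j k = 0
      · rw [if_pos hlt, if_pos ⟨hlt, hj0⟩]
        have hidx : (j k + N - 1) % N = N - 1 := by
          rw [hj0]
          simp [Nat.mod_eq_of_lt (by omega : N - 1 < N)]
        rw [hidx]
        have hcast : ((N - 1 : ℕ) : ℝ) = (N : ℝ) - 1 := by
          push_cast [Nat.cast_sub hN]; ring
        have hφ0 : (0:ℝ) ≤ φ k := by
          have := hφ1; rw [hj0] at this; simpa using this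
        have hlt0 : φ k - ψ k < 0 := by
          have := hlt; rw [hj0] at this; simpa using this
        constructor
        · rw [hcast, sub_div, div_self hNne]
          linarith
        · rw [hcast]
          have h1 : ((N:ℝ) - 1 + 1) / N = 1 := by field_simp; ring
          rw [h1]; linarith
      · have hj1 : 1 ≤ j k := Nat.one_le_iff_ne_zero.mpr hj0
        rw [if_pos hlt, if_neg (fun hc => hj0 hc.2)]
        have hidx : (j k + N - 1) % N = j k - 1 := by
          have h2 : j k + N - 1 = (j k - 1) + N := by omega
          rw [h2, Nat.add_mod_right, Nat.mod_eq_of_lt (by omega)]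
        rw [hidx]
        have hcast : ((j k - 1 : ℕ) : ℝ) = (j k : ℝ) - 1 := by
          push_cast [Nat.cast_sub hj1]; ring
        constructor
        · rw [hcast, sub_div]
          linarith
        · rw [hcast]
          have h2 : ((j k:ℝ) - 1 + 1) / N = (j k : ℝ) / N := by ring_nf
          rw [h2]; exact hlt
    · rw [if_neg hlt, if_neg (fun hc => hlt hc.1)]
      have hidx : (j k + N - 0) % N = j k := by
        simp [Nat.add_mod_right, Nat.mod_eq_of_lt hjk]
      rw [hidx]
      exact ⟨le_of_not_gt hlt, by linarith⟩
  · rw [← h]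
    congr 2
    apply Finset.sum_congr rfl
    intro k _
    dsimp only
    by_cases hc : φ k - ψ k < (j k : ℝ) / N ∧ j k = 0
    · rw [if_pos hc]
      push_cast
      rw [mul_add, Complex.exp_add, mul_one, Complex.exp_two_pi_mul_I]
      ring
    · rw [if_neg hc]
end

section
/- Any family of pairwise mutually unbiased orthonormal bases of ℂ^d contains at most d + 1 bases. -/
set_option linter.unnecessarySimpa false


noncomputable section

/-- Two families of vectors in `ℂ^d` are unbiased if all pairwise inner products
have modulus `1/√d`. -/
def Unbiased {d : ℕ} (A B : Fin d → EuclideanSpace ℂ (Fin d)) : Prop :=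
  ∀ j k, ‖(inner ℂ (A j) (B k) : ℂ)‖ = 1 / Real.sqrt d

open Matrix

def PP {d : ℕ} (v : EuclideanSpace ℂ (Fin d)) : Matrix (Fin d) (Fin d) ℂ :=
  Matrix.of fun a b => v a * (starRingEnd ℂ) (v b)

lemma trace_PP_mul_PP {d : ℕ} (v w : EuclideanSpace ℂ (Fin d)) :
    Matrix.trace (PP v * PP w) = (starRingEnd ℂ) (inner ℂ v w : ℂ) * (inner ℂ v w : ℂ) := by
  rw [PiLp.inner_apply, map_sum, Finset.sum_mul_sum]
  simp only [_root_.map_mul, starRingEnd_self_apply, RCLike.inner_apply, Matrix.trace,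
    Matrix.diag, Matrix.mul_apply, PP, Matrix.of_apply]
  refine Finset.sum_congr rfl fun a _ => Finset.sum_congr rfl fun b _ => by ring

lemma trace_PP {d : ℕ} (v : EuclideanSpace ℂ (Fin d)) :
    Matrix.trace (PP v) = (inner ℂ v v : ℂ) := by
  simp only [Matrix.trace, Matrix.diag, PP, Matrix.of_apply, PiLp.inner_apply, RCLike.inner_apply]

/-- traceless projection -/
def QQ {d : ℕ} (v : EuclideanSpace ℂ (Fin d)) : Matrix (Fin d) (Fin d) ℂ :=
  PP v - ((d : ℂ)⁻¹) • 1

lemma trace_QQ_mul_QQ {d : ℕ} (hd : 0 < d) (v w : EuclideanSpace ℂ (Fin d))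
    (hv : ‖v‖ = 1) (hw : ‖w‖ = 1) :
    Matrix.trace (QQ v * QQ w)
      = (starRingEnd ℂ) (inner ℂ v w : ℂ) * (inner ℂ v w : ℂ) - (d : ℂ)⁻¹ := by
  have hdc : (d : ℂ) ≠ 0 := Nat.cast_ne_zero.mpr hd.ne'
  have hv1 : (inner ℂ v v : ℂ) = 1 := by
    rw [inner_self_eq_norm_sq_to_K, hv]; norm_num
  have hw1 : (inner ℂ w w : ℂ) = 1 := by
    rw [inner_self_eq_norm_sq_to_K, hw]; norm_num
  simp only [QQ, sub_mul, mul_sub, Matrix.smul_mul, Matrix.mul_smul, one_mul, mul_one,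
    smul_smul]
  rw [Matrix.trace_sub, Matrix.trace_sub, Matrix.trace_sub, trace_PP_mul_PP,
    Matrix.trace_smul, Matrix.trace_smul, Matrix.trace_smul, trace_PP, trace_PP,
    Matrix.trace_one, hv1, hw1]
  simp only [smul_eq_mul, Finset.card_univ, Fintype.card_fin, mul_one]
  field_simp
  ring

lemma trace_QQ {d : ℕ} (hd : 0 < d) (v : EuclideanSpace ℂ (Fin d)) (hv : ‖v‖ = 1) :
    Matrix.trace (QQ v) = 0 := by
  have hdc : (d : ℂ) ≠ 0 := Nat.cast_ne_zero.mpr hd.ne'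
  have hv1 : (inner ℂ v v : ℂ) = 1 := by
    rw [inner_self_eq_norm_sq_to_K, hv]; norm_num
  rw [QQ, Matrix.trace_sub, trace_PP, Matrix.trace_smul, Matrix.trace_one, hv1]
  simp only [smul_eq_mul, Finset.card_univ, Fintype.card_fin]
  field_simp
  ring

lemma key_card_le (d n : ℕ) (hd : 2 ≤ d)
    (B : Fin n → OrthonormalBasis (Fin d) ℂ (EuclideanSpace ℂ (Fin d)))
    (hB : ∀ i i', i ≠ i' → Unbiased (B i) (B i')) : n ≤ d + 1 := by
  have hd0 : 0 < d := by omega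
  have hdc : (d : ℂ) ≠ 0 := Nat.cast_ne_zero.mpr hd0.ne'
  set M : Unit ⊕ (Fin n × Fin (d - 1)) → Matrix (Fin d) (Fin d) ℂ :=
    fun x => Sum.elim (fun _ => (1 : Matrix (Fin d) (Fin d) ℂ))
      (fun p => QQ (B p.1 (Fin.castLE (Nat.sub_le d 1) p.2))) x with hM
  have hnorm : ∀ i j, ‖B i j‖ = 1 := fun i j => (B i).orthonormal.1 j
  have hQQ : ∀ (i i' : Fin n) (j j' : Fin d),
      Matrix.trace (QQ (B i j) * QQ (B i' j'))
        = (if i = i' then (if j = j' then 1 else 0) else (d : ℂ)⁻¹) - (d : ℂ)⁻¹ := by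
    intro i i' j j'
    rw [trace_QQ_mul_QQ hd0 _ _ (hnorm i j) (hnorm i' j')]
    congr 1
    by_cases h : i = i'
    · subst h
      simp only [if_pos rfl]
      have horth := (B i).orthonormal
      rw [orthonormal_iff_ite] at horth
      rw [horth j j']
      by_cases hj : j = j' <;> simp [hj]
    · rw [if_neg h]
      have hub := hB i i' h j j'
      rw [Complex.conj_mul']
      have hn2 : ‖(inner ℂ (B i j) (B i' j') : ℂ)‖^2 = (d : ℝ)⁻¹ := by
        rw [hub, div_pow, one_pow, Real.sq_sqrt (Nat.cast_nonneg d), one_div]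
      calc ((‖(inner ℂ (B i j) (B i' j') : ℂ)‖ : ℂ))^2
          = ((‖(inner ℂ (B i j) (B i' j') : ℂ)‖^2 : ℝ) : ℂ) := by push_cast; ring
        _ = (((d:ℝ)⁻¹ : ℝ) : ℂ) := by rw [hn2]
        _ = (d:ℂ)⁻¹ := by push_cast; ring
  have hLI : LinearIndependent ℂ M := by
    rw [Fintype.linearIndependent_iff]
    intro g hg
    have pair : ∀ A : Matrix (Fin d) (Fin d) ℂ,
        ∑ x, g x * Matrix.trace (A * M x) = 0 := by
      intro A
      have h0 := congrArg (fun X => Matrix.trace (A * X)) hg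
      simp only [Matrix.mul_sum, Matrix.mul_smul, Matrix.trace_sum, Matrix.trace_smul,
        smul_eq_mul, Matrix.mul_zero, Matrix.trace_zero] at h0
      exact h0
    have g0 : g (Sum.inl ()) = 0 := by
      have h1 := pair 1
      rw [Fintype.sum_sum_type] at h1
      simp only [hM, Sum.elim_inl, Sum.elim_inr] at h1
      have hz : ∀ (a : Fin n) (b : Fin (d-1)),
          Matrix.trace (QQ (B a (Fin.castLE (Nat.sub_le d 1) b))) = 0 :=
        fun a b => trace_QQ hd0 _ (hnorm _ _)
      simp only [hz, mul_zero, Finset.sum_const_zero, add_zero, Finset.univ_unique,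
        Finset.sum_singleton, one_mul, Matrix.trace_one, Finset.card_univ,
        Fintype.card_fin] at h1
      have h2 : g (Sum.inl ()) * (d : ℂ) = 0 := by
        simpa using h1
      exact (mul_eq_zero.mp h2).resolve_right hdc
    have gmain : ∀ (i : Fin n) (k : Fin (d-1)), g (Sum.inr (i, k)) = 0 := by
      intro i k
      have hps : ∀ k : Fin (d - 1),
          g (Sum.inr (i, k)) = (d:ℂ)⁻¹ * ∑ j : Fin (d-1), g (Sum.inr (i, j)) := by
        intro k
        have h1 := pair (QQ (B i (Fin.castLE (Nat.sub_le d 1) k)))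
        rw [Fintype.sum_sum_type] at h1
        simp only [hM, Sum.elim_inl, Sum.elim_inr] at h1
        simp only [hQQ, Finset.univ_unique, Finset.sum_singleton, g0, zero_mul,
          zero_add] at h1
        rw [← Finset.univ_product_univ, Finset.sum_product] at h1
        rw [Finset.sum_eq_single i (fun i' _ hne => by simp [Ne.symm hne])
            (fun h => absurd (Finset.mem_univ i) h)] at h1
        have hcast : ∀ y : Fin (d-1),
            (Fin.castLE (Nat.sub_le d 1) k = Fin.castLE (Nat.sub_le d 1) y) ↔ k = y :=
          fun y => ⟨fun h => Fin.castLE_injective _ h, fun h => by rw [h]⟩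
        simp only [eq_self_iff_true, if_true, hcast, mul_sub, mul_ite, mul_one, mul_zero,
          Finset.sum_sub_distrib, Finset.sum_ite_eq, Finset.mem_univ, if_pos,
          ← Finset.sum_mul] at h1
        linear_combination h1
      have hsum : (∑ j : Fin (d-1), g (Sum.inr (i, j))) = 0 := by
        set s := ∑ j : Fin (d-1), g (Sum.inr (i, j)) with hs
        have h2 : s = ((d-1 : ℕ) : ℂ) * ((d:ℂ)⁻¹ * s) := by
          conv_lhs => rw [hs, Finset.sum_congr rfl (fun j (_ : j ∈ Finset.univ) => hps j)]
          rw [Finset.sum_const, Finset.card_univ, Fintype.card_fin, nsmul_eq_mul]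
        have h3 : ((d-1:ℕ):ℂ) = (d:ℂ) - 1 := by
          push_cast [Nat.cast_sub (by omega : 1 ≤ d)]; ring
        rw [h3] at h2
        have h4 : (d:ℂ) * s = ((d:ℂ) - 1) * s := by
          calc (d:ℂ) * s = (d:ℂ) * (((d:ℂ)-1) * ((d:ℂ)⁻¹ * s)) := by rw [← h2]
          _ = ((d:ℂ)-1) * ((d:ℂ) * (d:ℂ)⁻¹ * s) := by ring
          _ = ((d:ℂ)-1) * s := by rw [mul_inv_cancel₀ hdc, one_mul]
        linear_combination h4
      rw [hps k, hsum, mul_zero]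
    intro x
    cases x with
    | inl u => cases u; exact g0
    | inr p => exact gmain p.1 p.2
  have hcard := hLI.fintype_card_le_finrank
  rw [Module.finrank_matrix, Module.finrank_self] at hcard
  simp only [Fintype.card_sum, Fintype.card_prod, Fintype.card_fin, Fintype.card_unit,
    mul_one] at hcard
  obtain ⟨e, rfl⟩ : ∃ e, d = e + 2 := ⟨d - 2, by omega⟩
  have he : e + 2 - 1 = e + 1 := rfl
  rw [he] at hcard
  nlinarith [hcard]

lemma finset_card_le (d : ℕ) (hd : 2 ≤ d)
    (S : Set (OrthonormalBasis (Fin d) ℂ (EuclideanSpace ℂ (Fin d))))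
    (hS : S.Pairwise fun B C => Unbiased ⇑B ⇑C)
    (t : Finset (OrthonormalBasis (Fin d) ℂ (EuclideanSpace ℂ (Fin d))))
    (ht : ↑t ⊆ S) : t.card ≤ d + 1 := by
  classical
  set e := t.equivFin with he
  refine key_card_le d t.card hd (fun i => (e.symm i : _)) ?_
  intro i i' hne
  have h1 : ((e.symm i : _) : OrthonormalBasis (Fin d) ℂ (EuclideanSpace ℂ (Fin d))) ∈ S :=
    ht (by simpa using (e.symm i).2)
  have h2 : ((e.symm i' : _) : OrthonormalBasis (Fin d) ℂ (EuclideanSpace ℂ (Fin d))) ∈ S :=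
    ht (by simpa using (e.symm i').2)
  exact hS h1 h2 (fun hEq => hne (e.symm.injective (Subtype.ext hEq)))

/-- Any family of pairwise mutually unbiased orthonormal bases of `ℂ^d` (with `d ≥ 2`)
contains at most `d + 1` bases. -/
theorem card_mub_le (d : ℕ) (hd : 2 ≤ d)
    (S : Set (OrthonormalBasis (Fin d) ℂ (EuclideanSpace ℂ (Fin d))))
    (hS : S.Pairwise fun B C => Unbiased ⇑B ⇑C) :
    S.encard ≤ d + 1 := by
  classical
  have hfin : S.Finite := by
    by_contra h
    obtain ⟨t, hts, hcard⟩ :=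
      Set.Infinite.exists_subset_card_eq (h : S.Infinite) (d + 2)
    have := finset_card_le d hd S hS t hts
    omega
  have hcard : hfin.toFinset.card ≤ d + 1 :=
    finset_card_le d hd S hS hfin.toFinset (by simp)
  calc S.encard = (hfin.toFinset.card : ℕ∞) := by
        rw [Set.Finite.encard_eq_coe_toFinset_card hfin]
    _ ≤ ((d + 1 : ℕ) : ℕ∞) := by exact_mod_cast hcard
    _ = (d : ℕ∞) + 1 := by push_cast; rfl
end
end
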